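/- Let H be a strongly primary monoid that is not half-factorial. Then there exists a rational β > 1 such that for every a ∈ H with |L(a)| ≥ 2 one has ρ(L(a)) = max L(a)/min L(a) ≥ β. That is, the elasticities of sets of lengths of H are bounded away from 1. -/

import Mathlib

open Classical

/-- The set of factorization lengths of `a` into irreducible elements (atoms);
by convention `{0}` for invertible elements. -/
noncomputable def mLengths {H : Type*} [Monoid H] (a : H) : Set ℕ :=
  if IsUnit a then {0}
  else {n | ∃ l : List H, l.length = n ∧ (∀ x ∈ l, Irreducible x) ∧ l.prod = a}

/-- A commutative cancellative monoid `M` is strongly primary if it has a non-unit and for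
every non-unit `a` there is `n ∈ ℕ` such that every product of `n` non-units lies in `aM`. -/
def StronglyPrimary (M : Type*) [CancelCommMonoid M] : Prop :=
  (∃ a : M, ¬IsUnit a) ∧
    ∀ a : M, ¬IsUnit a → ∃ n : ℕ, 0 < n ∧
      ∀ l : List M, l.length = n → (∀ x ∈ l, ¬IsUnit x) → a ∣ l.prod

section Aux

variable {H : Type*} [CancelCommMonoid H]

lemma mem_mLengths_of_list {a : H} (ha : ¬IsUnit a) {L : List H}
    (h1 : ∀ x ∈ L, Irreducible x) (h2 : L.prod = a) : L.length ∈ mLengths a := by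
  simp only [mLengths, if_neg ha, Set.mem_setOf_eq]
  exact ⟨L, rfl, h1, h2⟩

lemma mLengths_spec {a : H} (ha : ¬IsUnit a) {n : ℕ} (hn : n ∈ mLengths a) :
    ∃ L : List H, L.length = n ∧ (∀ x ∈ L, Irreducible x) ∧ L.prod = a := by
  simpa [mLengths, if_neg ha] using hn

lemma one_le_of_mem_mLengths {a : H} (ha : ¬IsUnit a) {n : ℕ} (hn : n ∈ mLengths a) : 1 ≤ n := by
  obtain ⟨L, hlen, _, hprod⟩ := mLengths_spec ha hn
  rcases Nat.eq_zero_or_pos n with h0 | h1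
  · subst h0
    have : L = [] := List.length_eq_zero_iff.mp hlen
    subst this
    simp only [List.prod_nil] at hprod
    exact absurd (hprod ▸ isUnit_one) ha
  · exact h1

lemma not_isUnit_of_two_lengths {a : H}
    (h : ∃ m ∈ mLengths a, ∃ n ∈ mLengths a, m ≠ n) : ¬IsUnit a := by
  intro hu
  obtain ⟨m, hm, n, hn, hmn⟩ := h
  simp only [mLengths, if_pos hu, Set.mem_singleton_iff] at hm hn
  exact hmn (hm.trans hn.symm)

/-- Any list of non-units with product `a` has length at most `n`, where `n` is
the strong-primary bound for `a`. -/
lemma length_le_of_nonunits {a : H} {n : ℕ}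
    (hn : ∀ l : List H, l.length = n → (∀ x ∈ l, ¬IsUnit x) → a ∣ l.prod)
    {L : List H} (h1 : ∀ x ∈ L, ¬IsUnit x) (h2 : L.prod = a) : L.length ≤ n := by
  by_contra h
  push_neg at h
  have htake : (L.take n).length = n := by
    simp only [List.length_take]
    omega
  obtain ⟨c, hc⟩ := hn _ htake (fun x hx => h1 x (List.mem_of_mem_take hx))
  have hsplit : L.prod = (L.take n).prod * (L.drop n).prod := by
    rw [← List.prod_append, List.take_append_drop]
  have heq : a * 1 = a * (c * (L.drop n).prod) := by
    rw [mul_one]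
    conv_lhs => rw [← h2, hsplit, hc]
    rw [mul_assoc]
  have h1' : (1 : H) = c * (L.drop n).prod := mul_left_cancel heq
  have hdropne : L.drop n ≠ [] := by
    intro hh
    have := congrArg List.length hh
    simp only [List.length_drop, List.length_nil] at this
    omega
  have hhead : (L.drop n).head hdropne ∈ L.drop n := List.head_mem hdropne
  have hdvd : (L.drop n).head hdropne ∣ (1 : H) :=
    dvd_trans (List.dvd_prod hhead) ⟨c, by rw [h1', mul_comm]⟩
  exact h1 _ (List.mem_of_mem_drop hhead) (isUnit_of_dvd_one hdvd)

/-- In a strongly primary monoid every non-unit is a product of irreducibles. -/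
lemma exists_factorization (hsp : StronglyPrimary H) {a : H} (ha : ¬IsUnit a) :
    ∃ L : List H, (∀ x ∈ L, Irreducible x) ∧ L.prod = a := by
  obtain ⟨n, _, hn⟩ := hsp.2 a ha
  set T : Set ℕ := {j | ∃ L : List H, L.length = j ∧ (∀ x ∈ L, ¬IsUnit x) ∧ L.prod = a} with hT
  have hne : T.Nonempty := ⟨1, [a], rfl, by simpa using ha, by simp⟩
  have hbdd : BddAbove T := by
    refine ⟨n, fun j hj => ?_⟩
    obtain ⟨L, hl, hL1, hL2⟩ := hj
    exact hl ▸ length_le_of_nonunits hn hL1 hL2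
  obtain ⟨L, hlen, hL1, hL2⟩ := Nat.sSup_mem hne hbdd
  refine ⟨L, fun x hx => ?_, hL2⟩
  rcases irreducible_or_factor (hL1 x hx) with h | ⟨y, z, hy, hz, hyz⟩
  · exact h
  · exfalso
    obtain ⟨s, t, hst⟩ := List.append_of_mem hx
    have hmem : L.length + 1 ∈ T := by
      refine ⟨s ++ y :: z :: t, ?_, ?_, ?_⟩
      · simp [hst]; omega
      · intro w hw
        simp only [List.mem_append, List.mem_cons] at hw
        rcases hw with h' | h' | h' | h'
        · exact hL1 w (hst ▸ (by simp [h']))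
        · exact h' ▸ hy
        · exact h' ▸ hz
        · exact hL1 w (hst ▸ (by simp [h']))
      · rw [← hL2, hst]
        simp only [List.prod_append, List.prod_cons]
        rw [hyz, mul_assoc y z]
    have := le_csSup hbdd hmem
    omega

lemma mul_mem_mLengths {x y : H} (hx : ¬IsUnit x) (hy : ¬IsUnit y)
    {i j : ℕ} (hi : i ∈ mLengths x) (hj : j ∈ mLengths y) : i + j ∈ mLengths (x * y) := by
  have hxy : ¬IsUnit (x * y) := fun h => hx (isUnit_of_mul_isUnit_left h)
  obtain ⟨L1, hl1, h11, h12⟩ := mLengths_spec hx hi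
  obtain ⟨L2, hl2, h21, h22⟩ := mLengths_spec hy hj
  have := mem_mLengths_of_list hxy (L := L1 ++ L2)
    (fun w hw => by rcases List.mem_append.mp hw with h | h; exacts [h11 w h, h21 w h])
    (by rw [List.prod_append, h12, h22])
  simpa [hl1, hl2] using this

lemma pow_mem_mLengths {b : H} (hb : ¬IsUnit b) {j : ℕ} (hj : j ∈ mLengths b) :
    ∀ q : ℕ, 1 ≤ q → q * j ∈ mLengths (b ^ q) := by
  intro q
  induction q with
  | zero => omega
  | succ q ih =>
    intro _
    rcases Nat.eq_zero_or_pos q with h0 | h1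
    · subst h0; simpa using hj
    · have hbq : ¬IsUnit (b ^ q) := fun h => hb ((isUnit_pow_iff h1.ne').mp h)
      have := mul_mem_mLengths hbq hb (ih h1) hj
      rw [← pow_succ] at this
      rw [show (q + 1) * j = q * j + j from by ring]
      exact this

lemma unit_mul_mem_mLengths {u x : H} (hu : IsUnit u) (hx : ¬IsUnit x) {j : ℕ}
    (hj : j ∈ mLengths x) : j ∈ mLengths (u * x) := by
  have hux : ¬IsUnit (u * x) := by
    intro h
    refine hx ?_
    obtain ⟨v, hv⟩ := hu
    have hxeq : x = ↑v⁻¹ * (u * x) := by rw [← hv, ← mul_assoc, Units.inv_mul, one_mul]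
    rw [hxeq]
    exact (v⁻¹).isUnit.mul h
  obtain ⟨L, hl, h1, h2⟩ := mLengths_spec hx hj
  have hj1 : 1 ≤ j := one_le_of_mem_mLengths hx hj
  obtain ⟨hd0, t, rfl⟩ := List.exists_cons_of_ne_nil
    (show L ≠ [] by intro hnil; rw [hnil] at hl; simp at hl; omega)
  have := mem_mLengths_of_list hux (L := (u * hd0) :: t)
    (fun w hw => by
      rcases List.mem_cons.mp hw with h' | h'
      · exact h' ▸ (irreducible_isUnit_mul hu).mpr (h1 hd0 List.mem_cons_self)
      · exact h1 w (List.mem_cons_of_mem hd0 h'))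
    (by simp only [List.prod_cons] at h2 ⊢; rw [mul_assoc, h2])
  simpa [← hl] using this

lemma pow_dvd_prod_of_nonunits {b : H} {N : ℕ}
    (hN : ∀ l : List H, l.length = N → (∀ x ∈ l, ¬IsUnit x) → b ∣ l.prod) :
    ∀ (q : ℕ) (L : List H), (∀ x ∈ L, ¬IsUnit x) → q * N ≤ L.length → b ^ q ∣ L.prod := by
  intro q
  induction q with
  | zero => intro L _ _; simpa using one_dvd _
  | succ q ih =>
    intro L h1 h2
    rw [add_mul, one_mul] at h2
    have htl : (L.take N).length = N := by
      simp only [List.length_take]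
      omega
    have h3 : b ∣ (L.take N).prod := hN _ htl (fun x hx => h1 x (List.mem_of_mem_take hx))
    have h4 : b ^ q ∣ (L.drop N).prod :=
      ih _ (fun x hx => h1 x (List.mem_of_mem_drop hx))
        (by simp only [List.length_drop]; omega)
    have hsplit : L.prod = (L.take N).prod * (L.drop N).prod := by
      rw [← List.prod_append, List.take_append_drop]
    rw [hsplit, pow_succ']
    exact mul_dvd_mul h3 h4

end Aux

/-- If `H` is a strongly primary monoid that is not half-factorial, then there is a rational
`β > 1` such that every set of lengths of `H` with at least two elements has elasticity
`max L(a) / min L(a) ≥ β`. -/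
theorem stmt7 {H : Type*} [CancelCommMonoid H] (hsp : StronglyPrimary H)
    (hnhf : ∃ a : H, ∃ m ∈ mLengths a, ∃ n ∈ mLengths a, m ≠ n) :
    ∃ β : ℚ, 1 < β ∧ ∀ a : H, (∃ m ∈ mLengths a, ∃ n ∈ mLengths a, m ≠ n) →
      β ≤ ((sSup (mLengths a) : ℕ) : ℚ) / ((sInf (mLengths a) : ℕ) : ℚ) := by
  classical
  -- fix an element with two distinct lengths k < l
  obtain ⟨b, m1, hm1, m2, hm2, hm12⟩ := hnhf
  have hb : ¬IsUnit b := not_isUnit_of_two_lengths ⟨m1, hm1, m2, hm2, hm12⟩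
  obtain ⟨k, l, hk, hl, hkl⟩ : ∃ k l : ℕ, k ∈ mLengths b ∧ l ∈ mLengths b ∧ k < l := by
    rcases lt_or_gt_of_ne hm12 with h | h
    · exact ⟨m1, m2, hm1, hm2, h⟩
    · exact ⟨m2, m1, hm2, hm1, h⟩
  obtain ⟨N, hN0, hN⟩ := hsp.2 b hb
  refine ⟨((N : ℚ) ^ 2 + 1) / (N : ℚ) ^ 2, ?_, ?_⟩
  · rw [lt_div_iff₀ (by positivity), one_mul]
    linarith
  intro a ha2
  have ha : ¬IsUnit a := not_isUnit_of_two_lengths ha2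
  set S := mLengths a with hS
  have hSne : S.Nonempty := by
    obtain ⟨x, hx, _⟩ := ha2
    exact ⟨x, hx⟩
  have hSbdd : BddAbove S := by
    obtain ⟨na, _, hna⟩ := hsp.2 a ha
    refine ⟨na, fun j hj => ?_⟩
    obtain ⟨L, hl', hL1, hL2⟩ := mLengths_spec ha hj
    exact hl' ▸ length_le_of_nonunits hna (fun x hx => (hL1 x hx).not_isUnit) hL2
  set m := sInf S with hm
  set M := sSup S with hM
  have hmS : m ∈ S := Nat.sInf_mem hSne
  have hMS : M ∈ S := Nat.sSup_mem hSne hSbdd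
  have hm1' : 1 ≤ m := one_le_of_mem_mLengths ha hmS
  have hmM : m < M := by
    obtain ⟨x, hx, y, hy, hxy⟩ := ha2
    have h1 := Nat.sInf_le hx
    have h2 := Nat.sInf_le hy
    have h3 := le_csSup hSbdd hx
    have h4 := le_csSup hSbdd hy
    rcases lt_or_eq_of_le (le_trans h1 h3) with h | h
    · exact h
    · omega
  -- key inequality: (N^2 + 1) * m ≤ N^2 * M
  have key : (N ^ 2 + 1) * m ≤ N ^ 2 * M := by
    by_cases hcase : m < N
    · nlinarith
    · push_neg at hcase
      set q := m / N with hq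
      have hq1 : 1 ≤ q := (Nat.one_le_div_iff hN0).mpr hcase
      obtain ⟨v, hvlen, hv1, hv2⟩ := mLengths_spec ha hmS
      have hdvd : b ^ q ∣ a := by
        rw [← hv2]
        exact pow_dvd_prod_of_nonunits hN q v (fun x hx => (hv1 x hx).not_isUnit)
          (by rw [hvlen, hq]; exact Nat.div_mul_le_self m N)
      obtain ⟨d, hd⟩ := hdvd
      have hbq : ¬IsUnit (b ^ q) := fun h => hb ((isUnit_pow_iff (by omega)).mp h)
      have hql : q * l ∈ mLengths (b ^ q) := pow_mem_mLengths hb hl q hq1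
      have hqk : q * k ∈ mLengths (b ^ q) := pow_mem_mLengths hb hk q hq1
      have hstep : m + q * l ≤ M + q * k := by
        by_cases hd' : IsUnit d
        · have hda : a = d * b ^ q := by rw [hd, mul_comm]
          have h1 : q * l ∈ S := by rw [hS, hda]; exact unit_mul_mem_mLengths hd' hbq hql
          have h2 : q * k ∈ S := by rw [hS, hda]; exact unit_mul_mem_mLengths hd' hbq hqk
          have h3 : q * l ≤ M := le_csSup hSbdd h1
          have h4 : m ≤ q * k := Nat.sInf_le h2
          omega
        · obtain ⟨Ld, hLd1, hLd2⟩ := exists_factorization hsp hd'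
          have hjd : Ld.length ∈ mLengths d := mem_mLengths_of_list hd' hLd1 hLd2
          have h1 : q * l + Ld.length ∈ S := by
            rw [hS, hd]; exact mul_mem_mLengths hbq hd' hql hjd
          have h2 : q * k + Ld.length ∈ S := by
            rw [hS, hd]; exact mul_mem_mLengths hbq hd' hqk hjd
          have h3 : q * l + Ld.length ≤ M := le_csSup hSbdd h1
          have h4 : m ≤ q * k + Ld.length := Nat.sInf_le h2
          omega
      have hMq : m + q ≤ M := by
        have : q * k + q ≤ q * l := by
          have : k + 1 ≤ l := hkl
          calc q * k + q = q * (k + 1) := by ring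
            _ ≤ q * l := Nat.mul_le_mul_left q this
        omega
      -- N^2 * q ≥ m
      have hmod : N * q + m % N = m := Nat.div_add_mod m N
      set r := m % N with hr
      have hrN : r < N := Nat.mod_lt m hN0
      have hNq : m ≤ N ^ 2 * q := by
        have hA : N * q * (r + 1) ≤ N * q * N := Nat.mul_le_mul_left _ hrN
        have hC : r ≤ N * q * r := Nat.le_mul_of_pos_left r (by positivity)
        nlinarith [hA, hC, hmod]
      nlinarith [Nat.mul_le_mul_left (N ^ 2) hMq, hNq]
  -- conclude
  have hm0 : (0 : ℚ) < (m : ℚ) := by exact_mod_cast hm1'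
  rw [div_le_div_iff₀ (by positivity) hm0]
  have key' := key
  qify at key'
  push_cast at key'
  nlinarith [key']
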